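/- Let r ≥ 2, h a positive integer, and t ≥ 0. Suppose x_0, x_1, ..., x_r are nonnegative integers, each with base-h representation x_i = Σ_{j=0}^t x_{i,j} h^j where 0 ≤ x_{i,j} < h/r for all i, j, and suppose Σ_{j=0}^t x_{i,j}^2 = B for a common constant B and all i. If x_0 + x_1 + ... + x_{r-1} = r·x_r, then x_0 = x_1 = ... = x_r. -/

import Mathlib

/-- Uniqueness of base-`h` representation. -/
lemma digits_unique_aux (h : ℕ) (hh : 1 ≤ h) :
    ∀ n (a b : ℕ → ℕ), (∀ j < n, a j < h) → (∀ j < n, b j < h) →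
      (∑ j ∈ Finset.range n, a j * h ^ j) = (∑ j ∈ Finset.range n, b j * h ^ j) →
      ∀ j < n, a j = b j := by
  intro n
  induction n with
  | zero => intro a b _ _ _ j hj; omega
  | succ n ih =>
    intro a b ha hb heq j hj
    have hsa : (∑ j ∈ Finset.range (n+1), a j * h ^ j)
        = h * (∑ j ∈ Finset.range n, a (j+1) * h ^ j) + a 0 := by
      rw [Finset.sum_range_succ']
      simp only [pow_zero, mul_one]
      congr 1
      rw [Finset.mul_sum]
      exact Finset.sum_congr rfl fun k _ => by ring
    have hsb : (∑ j ∈ Finset.range (n+1), b j * h ^ j)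
        = h * (∑ j ∈ Finset.range n, b (j+1) * h ^ j) + b 0 := by
      rw [Finset.sum_range_succ']
      simp only [pow_zero, mul_one]
      congr 1
      rw [Finset.mul_sum]
      exact Finset.sum_congr rfl fun k _ => by ring
    rw [hsa, hsb] at heq
    have ha0 : a 0 < h := ha 0 (by omega)
    have hb0 : b 0 < h := hb 0 (by omega)
    have h0 : a 0 = b 0 := by
      have := congrArg (· % h) heq
      simpa [Nat.mul_add_mod, Nat.mod_eq_of_lt ha0, Nat.mod_eq_of_lt hb0] using this
    have htail : (∑ j ∈ Finset.range n, a (j+1) * h ^ j)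
        = ∑ j ∈ Finset.range n, b (j+1) * h ^ j := by
      have hhpos : 0 < h := hh
      have : h * (∑ j ∈ Finset.range n, a (j+1) * h ^ j)
          = h * (∑ j ∈ Finset.range n, b (j+1) * h ^ j) := by omega
      exact Nat.eq_of_mul_eq_mul_left hhpos this
    rcases j with _ | k
    · exact h0
    · exact ih (fun j => a (j+1)) (fun j => b (j+1))
        (fun j hjn => ha (j+1) (by omega)) (fun j hjn => hb (j+1) (by omega))
        htail k (by omega)

/-- If `x₀,…,x_r` have base-`h` digits `X i j < h/r` (for `j ≤ t`), all with the same
sum of squares of digits `B`, and `x₀ + ⋯ + x_{r-1} = r·x_r`, then all `x_i` are equal. -/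
theorem statement1 (r h t B : ℕ) (hr : 2 ≤ r) (hh : 1 ≤ h)
    (x : ℕ → ℕ) (X : ℕ → ℕ → ℕ)
    (hrepr : ∀ i ≤ r, x i = ∑ j ∈ Finset.range (t + 1), X i j * h ^ j)
    (hdig : ∀ i ≤ r, ∀ j ≤ t, r * X i j < h)
    (hB : ∀ i ≤ r, (∑ j ∈ Finset.range (t + 1), (X i j) ^ 2) = B)
    (hsum : (∑ i ∈ Finset.range r, x i) = r * x r) :
    ∀ i ≤ r, x i = x 0 := by
  -- rewrite the sum hypothesis digit-wise
  have hlhs : (∑ i ∈ Finset.range r, x i)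
      = ∑ j ∈ Finset.range (t+1), (∑ i ∈ Finset.range r, X i j) * h ^ j := by
    rw [Finset.sum_congr rfl (fun i hi => hrepr i (le_of_lt (Finset.mem_range.mp hi))),
      Finset.sum_comm]
    simp [Finset.sum_mul]
  have hrhs : r * x r = ∑ j ∈ Finset.range (t+1), (r * X r j) * h ^ j := by
    rw [hrepr r le_rfl, Finset.mul_sum]
    exact Finset.sum_congr rfl fun j _ => by ring
  -- digit bounds
  have hla : ∀ j < t + 1, (∑ i ∈ Finset.range r, X i j) < h := by
    intro j hj
    have hrmul : r * (∑ i ∈ Finset.range r, X i j) ≤ r * (h - 1) := by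
      rw [Finset.mul_sum]
      calc ∑ i ∈ Finset.range r, r * X i j
          ≤ ∑ i ∈ Finset.range r, (h - 1) := by
            apply Finset.sum_le_sum
            intro i hi
            have := hdig i (le_of_lt (Finset.mem_range.mp hi)) j (by omega)
            omega
        _ = r * (h - 1) := by simp [mul_comm]
    have hrpos : 0 < r := by omega
    have hlt : r * (∑ i ∈ Finset.range r, X i j) < r * h :=
      lt_of_le_of_lt hrmul ((Nat.mul_lt_mul_left hrpos).mpr (by omega))
    exact Nat.lt_of_mul_lt_mul_left hlt
  have hlb : ∀ j < t + 1, r * X r j < h := fun j hj => hdig r le_rfl j (by omega)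
  -- no carries: digitwise equation
  have hdigeq : ∀ j < t + 1, (∑ i ∈ Finset.range r, X i j) = r * X r j := by
    apply digits_unique_aux h hh (t+1) _ _ hla hlb
    rw [← hlhs, ← hrhs]; exact hsum
  -- sum of squares of differences is zero (over ℤ)
  have key : ∑ i ∈ Finset.range r, ∑ j ∈ Finset.range (t+1),
      ((X i j : ℤ) - X r j)^2 = 0 := by
    have hBr : (∑ j ∈ Finset.range (t+1), ((X r j : ℤ))^2) = B :=
      by exact_mod_cast hB r le_rfl
    have step : ∀ i ∈ Finset.range r, ∑ j ∈ Finset.range (t+1),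
        ((X i j : ℤ) - X r j)^2
        = 2 * B - 2 * ∑ j ∈ Finset.range (t+1), (X r j : ℤ) * X i j := by
      intro i hi
      have hi' : i ≤ r := le_of_lt (Finset.mem_range.mp hi)
      have hBi : (∑ j ∈ Finset.range (t+1), ((X i j : ℤ))^2) = B :=
        by exact_mod_cast hB i hi'
      have : ∑ j ∈ Finset.range (t+1), ((X i j : ℤ) - X r j)^2
          = (∑ j ∈ Finset.range (t+1), ((X i j : ℤ))^2)
            - 2 * (∑ j ∈ Finset.range (t+1), (X r j : ℤ) * X i j)
            + ∑ j ∈ Finset.range (t+1), ((X r j : ℤ))^2 := by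
        rw [Finset.mul_sum, ← Finset.sum_sub_distrib, ← Finset.sum_add_distrib]
        apply Finset.sum_congr rfl
        intro j _
        ring
      rw [this, hBi, hBr]; ring
    rw [Finset.sum_congr rfl step]
    have hcross : ∑ i ∈ Finset.range r, ∑ j ∈ Finset.range (t+1),
        (X r j : ℤ) * X i j = r * B := by
      rw [Finset.sum_comm]
      have : ∀ j ∈ Finset.range (t+1), ∑ i ∈ Finset.range r, (X r j : ℤ) * X i j
          = r * ((X r j : ℤ))^2 := by
        intro j hj
        rw [← Finset.mul_sum]
        have := hdigeq j (Finset.mem_range.mp hj)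
        have hcast : (∑ i ∈ Finset.range r, (X i j : ℤ)) = r * X r j := by
          exact_mod_cast this
        rw [hcast]; ring
      rw [Finset.sum_congr rfl this, ← Finset.mul_sum, hBr]
    rw [Finset.sum_sub_distrib, ← Finset.mul_sum, ← Finset.mul_sum, hcross, Finset.sum_const,
      Finset.card_range, nsmul_eq_mul]
    ring
  -- each difference is zero
  have hXeq : ∀ i < r, ∀ j < t + 1, X i j = X r j := by
    intro i hi j hj
    have hnn : ∀ i ∈ Finset.range r, (0:ℤ) ≤ ∑ j ∈ Finset.range (t+1),
        ((X i j : ℤ) - X r j)^2 :=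
      fun i _ => Finset.sum_nonneg (fun j _ => sq_nonneg _)
    have h1 := (Finset.sum_eq_zero_iff_of_nonneg hnn).mp key i (Finset.mem_range.mpr hi)
    have hnn2 : ∀ j ∈ Finset.range (t+1), (0:ℤ) ≤ ((X i j : ℤ) - X r j)^2 :=
      fun j _ => sq_nonneg _
    have h2 := (Finset.sum_eq_zero_iff_of_nonneg hnn2).mp h1 j (Finset.mem_range.mpr hj)
    have : (X i j : ℤ) = X r j := by nlinarith [h2]
    exact_mod_cast this
  -- conclude: every x i equals x r
  have hxr : ∀ i ≤ r, x i = x r := by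
    intro i hi
    rcases eq_or_lt_of_le hi with rfl | hi'
    · rfl
    · rw [hrepr i hi, hrepr r le_rfl]
      apply Finset.sum_congr rfl
      intro j hj
      rw [hXeq i hi' j (Finset.mem_range.mp hj)]
  intro i hi
  rw [hxr i hi, hxr 0 (by omega)]
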